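/- Every higher block system of a strongly synchronizing subshift is strongly synchronizing. -/

import Mathlib

/-- The shift on `Σ^ℤ`: `(x_i)_{i∈ℤ} ↦ (x_{i+1})_{i∈ℤ}`. -/
def shift {A : Type*} (x : ℤ → A) : ℤ → A := fun i => x (i + 1)

/-- The word `x_{[a,b]}` carried by the block of `x` on the interval `[a, b]`. -/
def block {A : Type*} (x : ℤ → A) (a b : ℤ) : List A :=
  (List.range (b + 1 - a).toNat).map fun k => x (a + k)

/-- A word is admissible for `X` if it appears in a point of `X`. -/
def Admissible {A : Type*} (X : Set (ℤ → A)) (w : List A) : Prop :=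
  ∃ x ∈ X, ∃ n : ℤ, ∀ (k : ℕ) (h : k < w.length), x (n + k) = w.get ⟨k, h⟩

/-- A word `v` is synchronizing for `X` if it is admissible and whenever `uv` and `vw`
are admissible, so is `uvw`. -/
def IsSyncWord {A : Type*} (X : Set (ℤ → A)) (v : List A) : Prop :=
  Admissible X v ∧ ∀ u w : List A, Admissible X (u ++ v) → Admissible X (v ++ w) →
    Admissible X (u ++ v ++ w)

/-- A subshift: a nonempty, closed, shift-invariant subset of `Σ^ℤ`. -/
def IsSubshift {A : Type*} [TopologicalSpace A] (X : Set (ℤ → A)) : Prop :=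
  X.Nonempty ∧ IsClosed X ∧ shift '' X = X

/-- Topological transitivity of a subshift, expressed on its language: any two admissible
words can be joined by an admissible transition word. -/
def LangTransitive {A : Type*} (X : Set (ℤ → A)) : Prop :=
  ∀ u v : List A, Admissible X u → Admissible X v → ∃ w, Admissible X (u ++ w ++ v)

/-- A synchronizing subshift: topologically transitive with a synchronizing word. -/
def SyncSubshift {A : Type*} (X : Set (ℤ → A)) : Prop :=
  LangTransitive X ∧ ∃ v : List A, IsSyncWord X v

/-- A strongly synchronizing subshift: synchronizing symbols appear uniformly close
(within distance `Q`) to synchronizing words. -/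
def StronglySync {A : Type*} (X : Set (ℤ → A)) : Prop :=
  SyncSubshift X ∧ ∃ Q : ℕ, ∀ x ∈ X, ∀ I₁ I₂ : ℤ, I₁ ≤ I₂ →
    IsSyncWord X (block x I₁ I₂) →
    ∃ i : ℤ, I₁ - Q ≤ i ∧ i ≤ I₂ + Q ∧ IsSyncWord X [x i]

/-- The higher block system `X^{⟨[a,b]⟩}` of `X`, over the alphabet of words. -/
def higherBlock {A : Type*} (X : Set (ℤ → A)) (a b : ℤ) : Set (ℤ → List A) :=
  { y | ∃ x ∈ X, ∀ i : ℤ, y i = block x (i + a) (i + b) }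

namespace HB
variable {A : Type*}

lemma block_def (x : ℤ → A) (s t : ℤ) :
    block x s t = (List.range (t + 1 - s).toNat).map (fun k : ℕ => x (s + k)) := by
  unfold block
  simp only [List.bind_eq_flatMap, List.pure_def, ← List.map_eq_flatMap, List.map_map]
  rfl

lemma block_length (x : ℤ → A) (s t : ℤ) : (block x s t).length = (t + 1 - s).toNat := by
  rw [block_def, List.length_map, List.length_range]

lemma block_getElem (x : ℤ → A) (s t : ℤ) (k : ℕ) (hk : k < (block x s t).length) :
    (block x s t)[k] = x (s + k) := by
  simp only [block_def, List.getElem_map, List.getElem_range]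

lemma block_eq_block {x x' : ℤ → A} {p p' : ℤ} {n : ℕ}
    (h : ∀ k : ℕ, k < n → x (p + k) = x' (p' + k))
    {s t s' t' : ℤ} (h1 : s' - p' = s - p) (h2 : t' - s' = t - s)
    (h3 : p ≤ s) (h4 : t < p + n) :
    block x s t = block x' s' t' := by
  apply List.ext_getElem
  · simp only [block_length]; omega
  · intro k hk1 hk2
    rw [block_getElem, block_getElem]
    have hk : (k : ℤ) < t + 1 - s := by rw [block_length] at hk1; omega
    have e1 : s + (k : ℤ) = p + (((s - p).toNat + k : ℕ) : ℤ) := by push_cast; omega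
    have e2 : s' + (k : ℤ) = p' + (((s - p).toNat + k : ℕ) : ℤ) := by push_cast; omega
    rw [e1, e2]; exact h _ (by omega)

lemma block_cast {x : ℤ → A} {s t s' t' : ℤ} (h1 : s = s') (h2 : t = t') :
    block x s t = block x s' t' := by rw [h1, h2]

lemma block_singleton (x : ℤ → A) (p : ℤ) : block x p p = [x p] := by
  rw [block_def]
  have : (p + 1 - p).toNat = 1 := by omega
  rw [this, show List.range 1 = [0] from rfl]
  simp

lemma eq_of_block_eq {x x' : ℤ → A} {s t s' t' : ℤ}
    (h : block x s t = block x' s' t') {k : ℕ} (hk : (k : ℤ) < t + 1 - s) :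
    x (s + k) = x' (s' + k) := by
  have hk1 : k < (block x s t).length := by rw [block_length]; omega
  have hk2 : k < (block x' s' t').length := by rw [← h]; exact hk1
  calc x (s + k) = (block x s t)[k] := (block_getElem ..).symm
    _ = (block x' s' t')[k] := List.getElem_of_eq h hk1
    _ = x' (s' + k) := block_getElem ..

lemma slide {x x' : ℤ → A} {p p' : ℤ} {m L : ℕ} (hm : 1 ≤ m) (hL : 1 ≤ L)
    (h : ∀ k : ℕ, k < m → block x (p + k) (p + k + L - 1) = block x' (p' + k) (p' + k + L - 1)) :
    ∀ s : ℕ, s < m - 1 + L → x (p + s) = x' (p' + s) := by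
  intro s hs
  obtain ⟨k, r, hk, hr, hsr⟩ : ∃ k r : ℕ, k < m ∧ (r : ℤ) < (p + k + L - 1) + 1 - (p + k) ∧ k + r = s :=
    ⟨min s (m-1), s - min s (m-1), by omega, by push_cast; omega, by omega⟩
  have := eq_of_block_eq (h k hk) (k := r) hr
  rw [show p + (k:ℤ) + r = p + ((k+r:ℕ):ℤ) by push_cast; ring,
      show p' + (k:ℤ) + r = p' + ((k+r:ℕ):ℤ) by push_cast; ring, hsr] at this
  exact this

def Realizes (x : ℤ → A) (n : ℤ) (w : List A) : Prop :=
  ∀ (k : ℕ) (h : k < w.length), x (n + k) = w.get ⟨k, h⟩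

lemma admissible_iff {X : Set (ℤ → A)} {w : List A} :
    Admissible X w ↔ ∃ x ∈ X, ∃ n, Realizes x n w := Iff.rfl

lemma realizes_block (x : ℤ → A) (s t : ℤ) : Realizes x s (block x s t) :=
  fun k hk => by rw [List.get_eq_getElem, block_getElem]

lemma Realizes.append {x : ℤ → A} {n : ℤ} {u v : List A}
    (hu : Realizes x n u) (hv : Realizes x (n + u.length) v) : Realizes x n (u ++ v) := by
  intro k h
  rw [List.get_eq_getElem]
  by_cases hk : k < u.length
  · rw [List.getElem_append_left hk]
    have := hu k hk; rw [List.get_eq_getElem] at this; exact this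
  · push_neg at hk
    rw [List.getElem_append_right hk]
    have hlt : k - u.length < v.length := by
      have := h; simp only [List.length_append] at this; omega
    have := hv (k - u.length) hlt
    rw [List.get_eq_getElem] at this
    rw [← this]; congr 1; omega

lemma Realizes.append_left {x : ℤ → A} {n : ℤ} {u v : List A}
    (h : Realizes x n (u ++ v)) : Realizes x n u := by
  intro k hk
  have hk' : k < (u ++ v).length := by simp; omega
  have := h k hk'
  rw [List.get_eq_getElem, List.getElem_append_left hk] at this
  rw [List.get_eq_getElem]; exact this

lemma Realizes.append_right {x : ℤ → A} {n : ℤ} {u v : List A}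
    (h : Realizes x n (u ++ v)) : Realizes x (n + u.length) v := by
  intro k hk
  have hk' : u.length + k < (u ++ v).length := by simp; omega
  have h2 : x (n + ((u.length + k : ℕ) : ℤ)) = (u ++ v)[u.length + k]'hk' := by
    have := h (u.length + k) hk'; rw [List.get_eq_getElem] at this; exact this
  rw [List.getElem_append_right (by omega)] at h2
  rw [List.get_eq_getElem]
  have e : n + (u.length : ℤ) + k = n + ((u.length + k : ℕ) : ℤ) := by push_cast; ring
  rw [e, h2]; congr 1; simp

lemma Realizes.eq {x x' : ℤ → A} {n n' : ℤ} {w : List A}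
    (h : Realizes x n w) (h' : Realizes x' n' w) :
    ∀ k : ℕ, k < w.length → x (n + k) = x' (n' + k) :=
  fun k hk => (h k hk).trans (h' k hk).symm

lemma Realizes.of_eq {x x' : ℤ → A} {n n' : ℤ} {w : List A} (h : Realizes x n w)
    (agree : ∀ k : ℕ, k < w.length → x' (n' + k) = x (n + k)) : Realizes x' n' w :=
  fun k hk => (agree k hk).trans (h k hk)

lemma Realizes.shift {x : ℤ → A} {n n' : ℤ} {w : List A} (h : Realizes x n w)
    (e : n' = n) : Realizes x n' w := by rwa [e]

lemma block_of_realizes {x : ℤ → A} {n : ℤ} {w : List A} (h : Realizes x n w) :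
    block x n (n + w.length - 1) = w := by
  apply List.ext_getElem
  · rw [block_length]; omega
  · intro k hk1 hk2
    rw [block_getElem]
    have := h k hk2
    rw [List.get_eq_getElem] at this
    exact this

lemma adm_block {X : Set (ℤ → A)} {x : ℤ → A} (hx : x ∈ X) (s t : ℤ) :
    Admissible X (block x s t) := ⟨x, hx, s, realizes_block x s t⟩

lemma adm_prefix {X : Set (ℤ → A)} {u v : List A} (h : Admissible X (u ++ v)) :
    Admissible X u := by
  obtain ⟨x, hx, n, hr⟩ := h
  exact ⟨x, hx, n, Realizes.append_left hr⟩

lemma adm_suffix {X : Set (ℤ → A)} {u v : List A} (h : Admissible X (u ++ v)) :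
    Admissible X v := by
  obtain ⟨x, hx, n, hr⟩ := h
  exact ⟨x, hx, n + u.length, Realizes.append_right hr⟩

lemma sync_append_right {X : Set (ℤ → A)} {v q : List A}
    (hv : IsSyncWord X v) (hadm : Admissible X (v ++ q)) : IsSyncWord X (v ++ q) := by
  refine ⟨hadm, fun u w h1 h2 => ?_⟩
  have h1' : Admissible X (u ++ v ++ q) := by rw [List.append_assoc]; exact h1
  have hu : Admissible X (u ++ v) := adm_prefix h1'
  have h2' : Admissible X (v ++ (q ++ w)) := by rw [← List.append_assoc]; exact h2
  have h3 := hv.2 u (q ++ w) hu h2'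
  have e : u ++ (v ++ q) ++ w = u ++ v ++ (q ++ w) := by simp [List.append_assoc]
  rwa [e]

/-- The sequence of `[a,b]`-blocks of `x`. -/
def yb (x : ℤ → A) (a b : ℤ) : ℤ → List A := fun i => block x (i + a) (i + b)

lemma admY_iff {X : Set (ℤ → A)} {a b : ℤ} {w : List (List A)} :
    Admissible (higherBlock X a b) w ↔ ∃ x ∈ X, ∃ n, Realizes (yb x a b) n w := by
  constructor
  · rintro ⟨y, ⟨x, hx, hy⟩, n, hr⟩
    exact ⟨x, hx, n, by rwa [show y = yb x a b from funext hy] at hr⟩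
  · rintro ⟨x, hx, n, hr⟩
    exact ⟨yb x a b, ⟨x, hx, fun i => rfl⟩, n, hr⟩

lemma yb_eq {a b : ℤ} {x x' : ℤ → A} {q q' : ℤ} {M : ℕ}
    (h : ∀ s : ℕ, s < M → x (q + s) = x' (q' + s)) {p p' : ℤ}
    (h1 : p' + a - q' = p + a - q) (h3 : q ≤ p + a) (k : ℕ)
    (h4 : p + b + k < q + M) :
    yb x a b (p + k) = yb x' a b (p' + k) := by
  simp only [yb]
  exact block_eq_block h (by omega) (by omega) (by omega) (by omega)

lemma x_eq {a b : ℤ} (hab : a ≤ b) {x x' : ℤ → A} {p p' : ℤ} {N : ℕ} (hN : 1 ≤ N)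
    (h : ∀ k : ℕ, k < N → yb x a b (p + k) = yb x' a b (p' + k))
    {q q' : ℤ} (hq : q = p + a) (hq' : q' = p' + a)
    (s : ℕ) (hs : (s : ℤ) < N + b - a) :
    x (q + s) = x' (q' + s) := by
  subst hq hq'
  have hL1 : 1 ≤ (b + 1 - a).toNat := by omega
  have h' : ∀ k : ℕ, k < N → block x ((p+a) + k) ((p+a) + k + (b+1-a).toNat - 1)
      = block x' ((p'+a) + k) ((p'+a) + k + (b+1-a).toNat - 1) := by
    intro k hk
    have hh := h k hk
    simp only [yb] at hh
    calc block x ((p+a)+k) ((p+a)+k+(b+1-a).toNat-1)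
        = block x ((p+k)+a) ((p+k)+b) := block_cast (by ring) (by omega)
      _ = block x' ((p'+k)+a) ((p'+k)+b) := hh
      _ = block x' ((p'+a)+k) ((p'+a)+k+(b+1-a).toNat-1) := block_cast (by ring) (by omega)
  exact slide hN hL1 h' s (by omega)


lemma transferXY {X : Set (ℤ → A)} {a b : ℤ} (hab : a ≤ b)
    {x₀ : ℤ → A} (hx₀ : x₀ ∈ X) (n₀ : ℤ) (m : ℕ) (hm : 1 ≤ m)
    (hS : IsSyncWord X (block x₀ (n₀ + a) (n₀ + m - 1 + b))) :
    IsSyncWord (higherBlock X a b) (block (yb x₀ a b) n₀ (n₀ + m - 1)) := by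
  set S := block x₀ (n₀ + a) (n₀ + m - 1 + b) with hSdef
  set V := block (yb x₀ a b) n₀ (n₀ + m - 1) with hVdef
  have hSlen : S.length = m - 1 + (b+1-a).toNat := by rw [hSdef, block_length]; omega
  have hVlen : V.length = m := by rw [hVdef, block_length]; omega
  have RS0 : Realizes x₀ (n₀ + a) S := by rw [hSdef]; exact realizes_block _ _ _
  have RV0 : Realizes (yb x₀ a b) n₀ V := by rw [hVdef]; exact realizes_block _ _ _
  constructor
  · exact admY_iff.mpr ⟨x₀, hx₀, n₀, RV0⟩
  intro u w h1 h2
  obtain ⟨x₁, hx₁, n₁, R1⟩ := admY_iff.mp h1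
  obtain ⟨x₂, hx₂, n₂, R2⟩ := admY_iff.mp h2
  have agree1 := (R1.append_right).eq RV0
  have agree2 := (R2.append_left).eq RV0
  have P1 : ∀ s : ℕ, (s:ℤ) < (m:ℤ) + b - a →
      x₁ ((n₁ + (u.length:ℤ)) + a + s) = x₀ (n₀ + a + s) :=
    fun s hs => x_eq hab (N := m) hm
      (fun k hk => agree1 k (by rw [hVlen]; exact hk)) rfl rfl s hs
  have P2 : ∀ s : ℕ, (s:ℤ) < (m:ℤ) + b - a → x₂ (n₂ + a + s) = x₀ (n₀ + a + s) :=
    fun s hs => x_eq hab (N := m) hm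
      (fun k hk => agree2 k (by rw [hVlen]; exact hk)) rfl rfl s hs
  have RS1 : Realizes x₁ ((n₁ + (u.length:ℤ)) + a) S :=
    RS0.of_eq (fun k hk => P1 k (by rw [hSlen] at hk; omega))
  have RS2 : Realizes x₂ (n₂ + a) S :=
    RS0.of_eq (fun k hk => P2 k (by rw [hSlen] at hk; omega))
  set U := block x₁ (n₁ + a) (n₁ + a + u.length - 1) with hUdef
  have hUlen : U.length = u.length := by rw [hUdef, block_length]; omega
  have RUS : Realizes x₁ (n₁ + a) (U ++ S) := by
    refine Realizes.append (by rw [hUdef]; exact realizes_block _ _ _) (RS1.shift ?_)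
    rw [hUlen]; ring
  have hUS : Admissible X (U ++ S) := ⟨x₁, hx₁, n₁ + a, RUS⟩
  set W := block x₂ ((n₂ + a) + (S.length:ℤ)) ((n₂ + a) + S.length + w.length - 1) with hWdef
  have hWlen : W.length = w.length := by rw [hWdef, block_length]; omega
  have RSW : Realizes x₂ (n₂ + a) (S ++ W) :=
    RS2.append (by rw [hWdef]; exact realizes_block _ _ _)
  have hSW : Admissible X (S ++ W) := ⟨x₂, hx₂, n₂ + a, RSW⟩
  obtain ⟨x₃, hx₃, n₃, R3x⟩ := hS.2 U W hUS hSW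
  have R3 : Realizes x₃ n₃ (U ++ S ++ W) := R3x
  have P3a := (R3.append_left).eq RUS
  have R3b : Realizes x₃ n₃ (U ++ (S ++ W)) := by rw [← List.append_assoc]; exact R3
  have P3b := (R3b.append_right).eq RSW
  have hUSlen : (U ++ S).length = u.length + (m - 1 + (b+1-a).toNat) := by
    simp [hUlen, hSlen]
  have hSWlen : (S ++ W).length = (m - 1 + (b+1-a).toNat) + w.length := by
    simp [hSlen, hWlen]
  refine admY_iff.mpr ⟨x₃, hx₃, n₃ - a, ?_⟩
  have Ru : Realizes (yb x₃ a b) (n₃ - a) u :=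
    (R1.append_left).of_eq (fun k hk =>
      yb_eq P3a (by ring) (by omega) k (by omega))
  have RV3 : Realizes (yb x₃ a b) ((n₃ - a) + (u.length:ℤ)) V :=
    RV0.of_eq (fun k hk =>
      (yb_eq P3b (by omega) (by omega) k (by omega)).trans (agree2 k hk))
  have Rw3 : Realizes (yb x₃ a b) (((n₃ - a) + (u.length:ℤ)) + (V.length:ℤ)) w :=
    (R2.append_right).of_eq (fun k hk =>
      yb_eq P3b (by omega) (by omega) k (by omega))
  exact (Ru.append RV3).append
    (Rw3.shift (by rw [List.length_append]; push_cast; ring))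


lemma transferYX {X : Set (ℤ → A)} {a b : ℤ} (hab : a ≤ b)
    {x₀ : ℤ → A} (hx₀ : x₀ ∈ X) (n₀ : ℤ) (m : ℕ) (hm : 1 ≤ m)
    (hV : IsSyncWord (higherBlock X a b) (block (yb x₀ a b) n₀ (n₀ + m - 1))) :
    IsSyncWord X (block x₀ (n₀ + a) (n₀ + m - 1 + b)) := by
  set S := block x₀ (n₀ + a) (n₀ + m - 1 + b) with hSdef
  set V := block (yb x₀ a b) n₀ (n₀ + m - 1) with hVdef
  have hSlen : S.length = m - 1 + (b+1-a).toNat := by rw [hSdef, block_length]; omega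
  have hVlen : V.length = m := by rw [hVdef, block_length]; omega
  have RS0 : Realizes x₀ (n₀ + a) S := by rw [hSdef]; exact realizes_block _ _ _
  have RV0 : Realizes (yb x₀ a b) n₀ V := by rw [hVdef]; exact realizes_block _ _ _
  constructor
  · rw [hSdef]; exact adm_block hx₀ _ _
  intro U W hU hW
  obtain ⟨x₁, hx₁, n₁, R1x⟩ := hU
  have R1 : Realizes x₁ n₁ (U ++ S) := R1x
  obtain ⟨x₂, hx₂, n₂, R2x⟩ := hW
  have R2 : Realizes x₂ n₂ (S ++ W) := R2x
  have PS1 := (R1.append_right).eq RS0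
  have PS2 := (R2.append_left).eq RS0
  set u := block (yb x₁ a b) (n₁ - a) (n₁ - a + U.length - 1) with hudef
  have hulen : u.length = U.length := by rw [hudef, block_length]; omega
  have Ru : Realizes (yb x₁ a b) (n₁ - a) u := by rw [hudef]; exact realizes_block _ _ _
  have RV1 : Realizes (yb x₁ a b) ((n₁ - a) + (u.length:ℤ)) V :=
    RV0.of_eq (fun k hk => yb_eq PS1 (by omega) (by omega) k (by omega))
  have hadm1 : Admissible (higherBlock X a b) (u ++ V) :=
    admY_iff.mpr ⟨x₁, hx₁, n₁ - a, Ru.append RV1⟩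
  set w := block (yb x₂ a b) ((n₂ - a) + (V.length:ℤ)) ((n₂ - a) + V.length + W.length - 1)
    with hwdef
  have hwlen : w.length = W.length := by rw [hwdef, block_length]; omega
  have RV2 : Realizes (yb x₂ a b) (n₂ - a) V :=
    RV0.of_eq (fun k hk => yb_eq PS2 (by omega) (by omega) k (by omega))
  have Rw : Realizes (yb x₂ a b) ((n₂ - a) + (V.length:ℤ)) w := by
    rw [hwdef]; exact realizes_block _ _ _
  have hadm2 : Admissible (higherBlock X a b) (V ++ w) :=
    admY_iff.mpr ⟨x₂, hx₂, n₂ - a, RV2.append Rw⟩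
  obtain ⟨x₃, hx₃, n₃, R3x⟩ := hV.2 u w hadm1 hadm2
  obtain ⟨y₃, hy₃, n₃', R3y⟩ := admY_iff.mp ⟨x₃, hx₃, n₃, R3x⟩
  have R3 : Realizes (yb y₃ a b) n₃' (u ++ V ++ w) := R3y
  have Q3a := (R3.append_left).eq (Ru.append RV1)
  have R3b : Realizes (yb y₃ a b) n₃' (u ++ (V ++ w)) := by
    rw [← List.append_assoc]; exact R3
  have Q3b := (R3b.append_right).eq (RV2.append Rw)
  have huVlen : (u ++ V).length = U.length + m := by simp [hulen, hVlen]
  have hVwlen : (V ++ w).length = m + W.length := by simp [hVlen, hwlen]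
  have P3a : ∀ s : ℕ, (s:ℤ) < ((u ++ V).length : ℤ) + b - a →
      y₃ ((n₃' + a) + s) = x₁ (n₁ + s) :=
    fun s hs => x_eq hab (by omega) Q3a (by ring) (by ring) s hs
  have P3b : ∀ s : ℕ, (s:ℤ) < ((V ++ w).length : ℤ) + b - a →
      y₃ (((n₃' + a) + (u.length:ℤ)) + s) = x₂ (n₂ + s) :=
    fun s hs => x_eq hab (by omega) Q3b (by ring) (by ring) s hs
  refine ⟨y₃, hy₃, n₃' + a, ?_⟩
  have RUf : Realizes y₃ (n₃' + a) U :=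
    (R1.append_left).of_eq (fun k hk => P3a k (by omega))
  have RSf : Realizes y₃ ((n₃' + a) + (U.length:ℤ)) S := by
    refine RS0.of_eq (fun k hk => ?_)
    calc y₃ (((n₃' + a) + (U.length:ℤ)) + k)
        = y₃ ((n₃' + a) + ((U.length + k : ℕ):ℤ)) := by congr 1; push_cast; ring
      _ = x₁ (n₁ + ((U.length + k : ℕ):ℤ)) := P3a _ (by rw [hSlen] at hk; omega)
      _ = x₁ ((n₁ + (U.length:ℤ)) + k) := by congr 1; push_cast; ring
      _ = x₀ ((n₀ + a) + k) := PS1 k hk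
  have RWf : Realizes y₃ (((n₃' + a) + (U.length:ℤ)) + (S.length:ℤ)) W := by
    refine (R2.append_right).of_eq (fun k hk => ?_)
    calc y₃ ((((n₃' + a) + (U.length:ℤ)) + (S.length:ℤ)) + k)
        = y₃ (((n₃' + a) + (u.length:ℤ)) + ((S.length + k : ℕ):ℤ)) := by
          congr 1; push_cast; omega
      _ = x₂ (n₂ + ((S.length + k : ℕ):ℤ)) := P3b _ (by omega)
      _ = x₂ ((n₂ + (S.length:ℤ)) + k) := by congr 1; push_cast; ring
  exact (RUf.append RSf).append
    (RWf.shift (by rw [List.length_append]; push_cast; ring))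


lemma langTransitiveY {X : Set (ℤ → A)} {a b : ℤ} (hab : a ≤ b)
    (hLTX : LangTransitive X) : LangTransitive (higherBlock X a b) := by
  intro u v hu hv
  rcases eq_or_ne u [] with rfl | hu0
  · exact ⟨[], by simpa using hv⟩
  rcases eq_or_ne v [] with rfl | hv0
  · exact ⟨[], by simpa using hu⟩
  have hu1 : 1 ≤ u.length := List.length_pos_iff.mpr hu0
  have hv1 : 1 ≤ v.length := List.length_pos_iff.mpr hv0
  obtain ⟨x₁, hx₁, n₁, R1⟩ := admY_iff.mp hu
  obtain ⟨x₂, hx₂, n₂, R2⟩ := admY_iff.mp hv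
  set U := block x₁ (n₁ + a) (n₁ + u.length - 1 + b) with hUdef
  set V' := block x₂ (n₂ + a) (n₂ + v.length - 1 + b) with hVdef
  have hUlen : U.length = u.length - 1 + (b+1-a).toNat := by rw [hUdef, block_length]; omega
  have hVlen : V'.length = v.length - 1 + (b+1-a).toNat := by rw [hVdef, block_length]; omega
  obtain ⟨Wm, hWm⟩ := hLTX U V' (by rw [hUdef]; exact adm_block hx₁ _ _)
    (by rw [hVdef]; exact adm_block hx₂ _ _)
  obtain ⟨x₃, hx₃, n₃, R3x⟩ := hWm
  have R3 : Realizes x₃ n₃ (U ++ Wm ++ V') := R3x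
  have RU1 : Realizes x₁ (n₁ + a) U := by rw [hUdef]; exact realizes_block _ _ _
  have RV2 : Realizes x₂ (n₂ + a) V' := by rw [hVdef]; exact realizes_block _ _ _
  have PU := (R3.append_left.append_left).eq RU1
  have PV := (R3.append_right).eq RV2
  have hUWlen : (U ++ Wm).length = U.length + Wm.length := List.length_append
  set t := block (yb x₃ a b) ((n₃ - a) + (u.length:ℤ))
    ((n₃ - a) + u.length + ((Wm.length + (b+1-a).toNat - 1 : ℕ):ℤ) - 1) with htdef
  have htlen : t.length = Wm.length + (b+1-a).toNat - 1 := by rw [htdef, block_length]; omega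
  refine ⟨t, admY_iff.mpr ⟨x₃, hx₃, n₃ - a, ?_⟩⟩
  have Ru3 : Realizes (yb x₃ a b) (n₃ - a) u :=
    R1.of_eq (fun k hk => yb_eq PU (by omega) (by omega) k (by omega))
  have Rt3 : Realizes (yb x₃ a b) ((n₃ - a) + (u.length:ℤ)) t := by
    rw [htdef]; exact realizes_block _ _ _
  have Rv3 : Realizes (yb x₃ a b) (((n₃ - a) + (u.length:ℤ)) + (t.length:ℤ)) v :=
    R2.of_eq (fun k hk => yb_eq PV (by omega) (by omega) k (by omega))
  exact (Ru3.append Rt3).append (Rv3.shift (by rw [List.length_append]; push_cast; ring))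

end HB

/-- Every higher block system of a strongly synchronizing subshift is strongly
synchronizing. -/
theorem stmt2 {A : Type*} [Fintype A] (X : Set (ℤ → A))
    (hX : StronglySync X) (a b : ℤ) (hab : a ≤ b) :
    StronglySync (higherBlock X a b) := by
  obtain ⟨⟨hLTX, v₀, hv₀⟩, Q, hQ⟩ := hX
  constructor
  · refine ⟨HB.langTransitiveY hab hLTX, ?_⟩
    obtain ⟨x₀, hx₀, n₀, R0x⟩ := hv₀.1
    have R0 : HB.Realizes x₀ n₀ v₀ := R0x
    have Rq : HB.Realizes x₀ (n₀ + (v₀.length:ℤ))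
        (block x₀ (n₀ + (v₀.length:ℤ)) (n₀ + v₀.length + (b - a))) := HB.realizes_block _ _ _
    have RS : HB.Realizes x₀ n₀
        (v₀ ++ block x₀ (n₀ + (v₀.length:ℤ)) (n₀ + v₀.length + (b - a))) := R0.append Rq
    have hq0len : (block x₀ (n₀ + (v₀.length:ℤ)) (n₀ + v₀.length + (b - a))).length
        = (b + 1 - a).toNat := by rw [HB.block_length]; omega
    have hSsync := HB.sync_append_right hv₀ ⟨x₀, hx₀, n₀, RS⟩
    have hexp : block x₀ ((n₀ - a) + a) ((n₀ - a) + ((v₀.length + 1 : ℕ):ℤ) - 1 + b)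
        = v₀ ++ block x₀ (n₀ + (v₀.length:ℤ)) (n₀ + v₀.length + (b - a)) := by
      rw [← HB.block_of_realizes RS]
      exact HB.block_cast (by omega) (by rw [List.length_append, hq0len]; push_cast; omega)
    have hfin := HB.transferXY hab hx₀ (n₀ - a) (v₀.length + 1) (by omega)
      (by rw [hexp]; exact hSsync)
    exact ⟨_, hfin⟩
  · refine ⟨Q + (b - a).toNat, ?_⟩
    intro y hy I₁ I₂ hI hsync
    obtain ⟨x, hx, hyx⟩ := hy
    have hyb : y = HB.yb x a b := funext hyx
    have hm : 1 ≤ (I₂ + 1 - I₁).toNat := by omega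
    have hsync' : IsSyncWord (higherBlock X a b)
        (block (HB.yb x a b) I₁ (I₁ + (((I₂ + 1 - I₁).toNat : ℕ):ℤ) - 1)) := by
      rw [show block (HB.yb x a b) I₁ (I₁ + (((I₂ + 1 - I₁).toNat : ℕ):ℤ) - 1) = block y I₁ I₂ by
        rw [hyb]; exact HB.block_cast rfl (by omega)]
      exact hsync
    have hS := HB.transferYX hab hx I₁ (I₂ + 1 - I₁).toNat hm hsync'
    have hS2 : IsSyncWord X (block x (I₁ + a) (I₂ + b)) := by
      rw [show block x (I₁ + a) (I₂ + b)
          = block x (I₁ + a) (I₁ + (((I₂ + 1 - I₁).toNat : ℕ):ℤ) - 1 + b) from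
        HB.block_cast rfl (by omega)]
      exact hS
    obtain ⟨i₀, hi₁, hi₂, hisync⟩ := hQ x hx (I₁ + a) (I₂ + b) (by omega) hS2
    have Rxi : HB.Realizes x i₀ [x i₀] := by
      have := HB.realizes_block x i₀ i₀
      rwa [HB.block_singleton] at this
    have Rext : HB.Realizes x i₀ ([x i₀] ++ block x (i₀ + 1) (i₀ + (b - a))) :=
      Rxi.append ((HB.realizes_block x (i₀ + 1) (i₀ + (b - a))).shift (by norm_num))
    have hsync3 := HB.sync_append_right hisync ⟨x, hx, i₀, Rext⟩
    have hlen2 : ([x i₀] ++ block x (i₀ + 1) (i₀ + (b - a))).length = (b + 1 - a).toNat := by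
      rw [List.length_append, HB.block_length]; simp; omega
    have hexp2 : block x ((i₀ - a) + a) ((i₀ - a) + ((1 : ℕ):ℤ) - 1 + b)
        = [x i₀] ++ block x (i₀ + 1) (i₀ + (b - a)) := by
      rw [← HB.block_of_realizes Rext]
      exact HB.block_cast (by omega) (by rw [hlen2]; omega)
    have hfin := HB.transferXY hab hx (i₀ - a) 1 le_rfl (by rw [hexp2]; exact hsync3)
    refine ⟨i₀ - a, by omega, by omega, ?_⟩
    have e : block (HB.yb x a b) (i₀ - a) ((i₀ - a) + ((1 : ℕ):ℤ) - 1) = [y (i₀ - a)] := by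
      rw [hyb]
      rw [HB.block_cast (x := HB.yb x a b) rfl
        (show (i₀ - a) + ((1 : ℕ):ℤ) - 1 = i₀ - a by push_cast; ring)]
      exact HB.block_singleton _ _
    rwa [e] at hfin
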